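/- Let G be a group with lower central series Γ_*, and let f, g be endomorphisms of G with [f,x] ∈ Γ_{r+1} and [g,x] ∈ Γ_{s+1} for all x ∈ G (where [f,x] = f(x)x⁻¹). Then for all x ∈ G: [f∘g, x] ≡ [g,x]·[f,x] (mod Γ_{r+s+1}). -/

import Mathlib

section Aux

open scoped commutatorElement

variable {G : Type*} [Group G]

/-- Three subgroups lemma modulo a normal subgroup. -/
lemma three_subgroups (A B C N : Subgroup G) [N.Normal]
    (h1 : ⁅⁅B, C⁆, A⁆ ≤ N) (h2 : ⁅⁅C, A⁆, B⁆ ≤ N) : ⁅⁅A, B⁆, C⁆ ≤ N := by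
  have key : ∀ X Y : Subgroup G, ⁅X, Y⁆ ≤ N ↔
      ⁅X.map (QuotientGroup.mk' N), Y.map (QuotientGroup.mk' N)⁆ = ⊥ := by
    intro X Y
    rw [← Subgroup.map_commutator, Subgroup.map_eq_bot_iff, QuotientGroup.ker_mk']
  rw [key, Subgroup.map_commutator] at h1 h2 ⊢
  exact Subgroup.commutator_commutator_eq_bot_of_rotate h1 h2

lemma lcs_succ' (n : ℕ) :
    (⊤ : Subgroup G).lowerCentralSeries (n + 1) = ⁅(⊤ : Subgroup G).lowerCentralSeries n, (⊤ : Subgroup G)⁆ := rfl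

/-- `[Γ_{i+1}, Γ_{j+1}] ≤ Γ_{i+j+2}` (zero-indexed lower central series). -/
lemma lcs_comm_le : ∀ j i : ℕ,
    ⁅(⊤ : Subgroup G).lowerCentralSeries i, (⊤ : Subgroup G).lowerCentralSeries j⁆ ≤ (⊤ : Subgroup G).lowerCentralSeries (i + j + 1) := by
  intro j
  induction j with
  | zero =>
    intro i
    rw [Subgroup.lowerCentralSeries_zero, ← lcs_succ']
  | succ j ih =>
    intro i
    rw [lcs_succ' j, Subgroup.commutator_comm]
    apply three_subgroups
    · calc ⁅⁅(⊤ : Subgroup G), (⊤ : Subgroup G).lowerCentralSeries i⁆, (⊤ : Subgroup G).lowerCentralSeries j⁆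
          = ⁅(⊤ : Subgroup G).lowerCentralSeries (i + 1), (⊤ : Subgroup G).lowerCentralSeries j⁆ := by
            rw [Subgroup.commutator_comm (⊤ : Subgroup G), ← lcs_succ']
        _ ≤ (⊤ : Subgroup G).lowerCentralSeries (i + 1 + j + 1) := ih (i + 1)
        _ = (⊤ : Subgroup G).lowerCentralSeries (i + (j + 1) + 1) := by ring_nf
    · calc ⁅⁅(⊤ : Subgroup G).lowerCentralSeries i, (⊤ : Subgroup G).lowerCentralSeries j⁆, (⊤ : Subgroup G)⁆
          ≤ ⁅(⊤ : Subgroup G).lowerCentralSeries (i + j + 1), (⊤ : Subgroup G)⁆ :=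
            Subgroup.commutator_mono (ih i) le_rfl
        _ = (⊤ : Subgroup G).lowerCentralSeries (i + (j + 1) + 1) := by
            rw [← lcs_succ']; ring_nf

/-- The set of `y` with `[f,y] ∈ N` is a subgroup when `N` is normal. -/
def commSubgroup (f : G →* G) (N : Subgroup G) (hN : N.Normal) : Subgroup G where
  carrier := {y | f y * y⁻¹ ∈ N}
  one_mem' := by simpa using one_mem N
  mul_mem' := by
    intro x y hx hy
    have h : f (x * y) * (x * y)⁻¹ = (f x * x⁻¹) * (x * (f y * y⁻¹) * x⁻¹) := by
      rw [map_mul]; group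
    simpa only [Set.mem_setOf_eq, h] using mul_mem hx (hN.conj_mem _ hy x)
  inv_mem' := by
    intro x hx
    have h : f x⁻¹ * x⁻¹⁻¹ = (x⁻¹ * (f x * x⁻¹) * (x⁻¹)⁻¹)⁻¹ := by
      rw [map_inv]; group
    simpa only [Set.mem_setOf_eq, h] using inv_mem (hN.conj_mem _ hx x⁻¹)

lemma commute_calc {Q : Type*} [Group Q] (A B C D : Q)
    (h1 : Commute C A) (h2 : Commute C D) (h3 : Commute C B)
    (h4 : Commute D A) (h5 : Commute D (A * B * A⁻¹ * B⁻¹)) :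
    (C * A) * (D * B) * (C * A)⁻¹ * (D * B)⁻¹ = A * B * A⁻¹ * B⁻¹ := by
  have hX : Commute C (A * D * B * A⁻¹) :=
    ((h1.mul_right h2).mul_right h3).mul_right h1.inv_right
  calc (C * A) * (D * B) * (C * A)⁻¹ * (D * B)⁻¹
      = (C * (A * D * B * A⁻¹)) * C⁻¹ * (B⁻¹ * D⁻¹) := by group
    _ = ((A * D * B * A⁻¹) * C) * C⁻¹ * (B⁻¹ * D⁻¹) := by rw [hX.eq]
    _ = (D * A) * (B * A⁻¹ * B⁻¹ * D⁻¹) := by rw [← h4.eq]; group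
    _ = (D * (A * B * A⁻¹ * B⁻¹)) * D⁻¹ := by group
    _ = ((A * B * A⁻¹ * B⁻¹) * D) * D⁻¹ := by rw [h5.eq]
    _ = A * B * A⁻¹ * B⁻¹ := by group

/-- Key lemma: if `[f,x] ∈ Γ_{r+1}` for all `x`, then `[f,y] ∈ Γ_{k+r+1}`
for `y ∈ Γ_{k+1}` (zero-indexed). -/
lemma key_lemma (f : G →* G) (r : ℕ)
    (hf : ∀ x : G, f x * x⁻¹ ∈ (⊤ : Subgroup G).lowerCentralSeries r) :
    ∀ k : ℕ, ∀ y ∈ (⊤ : Subgroup G).lowerCentralSeries k, f y * y⁻¹ ∈ (⊤ : Subgroup G).lowerCentralSeries (k + r) := by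
  intro k
  induction k with
  | zero => intro y _; simpa using hf y
  | succ k ih =>
    set N := (⊤ : Subgroup G).lowerCentralSeries (k + 1 + r) with hNdef
    have hN : N.Normal := Subgroup.lowerCentralSeries_normal _ _
    suffices h : (⊤ : Subgroup G).lowerCentralSeries (k + 1) ≤ commSubgroup f N hN by
      intro y hy; exact h hy
    rw [lcs_succ', Subgroup.commutator_le]
    intro a ha b _
    show f ⁅a, b⁆ * ⁅a, b⁆⁻¹ ∈ N
    -- pass to the quotient G ⧸ N
    rw [← QuotientGroup.eq_one_iff, QuotientGroup.mk_mul, QuotientGroup.mk_inv,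
      mul_inv_eq_one]
    have mk_comm : ∀ u v : G, ((⁅u, v⁆ : G) : G ⧸ N) = ⁅(u : G ⧸ N), (v : G ⧸ N)⁆ := by
      intro u v; simp [commutatorElement_def]
    set c : G := f a * a⁻¹ with hc
    set d : G := f b * b⁻¹ with hd
    have hcmem : c ∈ (⊤ : Subgroup G).lowerCentralSeries (k + r) := ih a ha
    have hdmem : d ∈ (⊤ : Subgroup G).lowerCentralSeries r := hf b
    have hfa : f a = c * a := by rw [hc]; group
    have hfb : f b = d * b := by rw [hd]; group
    -- c is central mod N
    have hcz : ∀ z : G, Commute ((c : G ⧸ N)) ((z : G ⧸ N)) := by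
      intro z
      rw [← commutatorElement_eq_one_iff_commute, ← mk_comm, QuotientGroup.eq_one_iff]
      have : ⁅c, z⁆ ∈ ⁅(⊤ : Subgroup G).lowerCentralSeries (k + r), (⊤ : Subgroup G)⁆ :=
        Subgroup.commutator_mem_commutator hcmem (Subgroup.mem_top z)
      rw [← lcs_succ'] at this
      have he : k + r + 1 = k + 1 + r := by ring
      rwa [he] at this
    -- d commutes with a mod N
    have hda : Commute ((d : G ⧸ N)) ((a : G ⧸ N)) := by
      rw [← commutatorElement_eq_one_iff_commute, ← mk_comm, QuotientGroup.eq_one_iff]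
      have : ⁅d, a⁆ ∈ ⁅(⊤ : Subgroup G).lowerCentralSeries r, (⊤ : Subgroup G).lowerCentralSeries k⁆ :=
        Subgroup.commutator_mem_commutator hdmem ha
      have h2 := lcs_comm_le k r this
      have he : r + k + 1 = k + 1 + r := by ring
      rwa [he] at h2
    -- d commutes with [a,b] mod N
    have hdab : Commute ((d : G ⧸ N))
        ((a : G ⧸ N) * (b : G ⧸ N) * (a : G ⧸ N)⁻¹ * (b : G ⧸ N)⁻¹) := by
      have hab : ⁅a, b⁆ ∈ (⊤ : Subgroup G).lowerCentralSeries (k + 1) := by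
        rw [lcs_succ']
        exact Subgroup.commutator_mem_commutator ha (Subgroup.mem_top b)
      have : ⁅d, ⁅a, b⁆⁆ ∈ ⁅(⊤ : Subgroup G).lowerCentralSeries r, (⊤ : Subgroup G).lowerCentralSeries (k + 1)⁆ :=
        Subgroup.commutator_mem_commutator hdmem hab
      have h2 := lcs_comm_le (k + 1) r this
      have h3 : ⁅d, ⁅a, b⁆⁆ ∈ N := by
        refine Subgroup.lowerCentralSeries_antitone ⊤ (by omega) h2
      have h4 : Commute ((d : G ⧸ N)) ((⁅a, b⁆ : G) : G ⧸ N) := by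
        rw [← commutatorElement_eq_one_iff_commute, ← mk_comm, QuotientGroup.eq_one_iff]
        exact h3
      rwa [mk_comm, commutatorElement_def] at h4
    have expand : ((f ⁅a, b⁆ : G) : G ⧸ N)
        = ((c : G ⧸ N) * (a : G ⧸ N)) * ((d : G ⧸ N) * (b : G ⧸ N))
          * ((c : G ⧸ N) * (a : G ⧸ N))⁻¹ * ((d : G ⧸ N) * (b : G ⧸ N))⁻¹ := by
      rw [map_commutatorElement, hfa, hfb]
      simp [commutatorElement_def, mul_assoc]
    rw [expand, mk_comm, commutatorElement_def]
    exact commute_calc _ _ _ _ (hcz a) (hcz d) (hcz b) hda hdab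

end Aux

/-- `Gam G k` is the `k`-th term `Γ_k` of the lower central series of `G`
(with the convention `Γ_1 = G`). -/
abbrev Gam (G : Type*) [Group G] (k : ℕ) : Subgroup G := (⊤ : Subgroup G).lowerCentralSeries (k - 1)

/-- If `[f,x] ∈ Γ_{r+1}` and `[g,x] ∈ Γ_{s+1}` for all `x` (where `[f,x] = f(x)x⁻¹`),
then `[f∘g, x] ≡ [g,x]·[f,x] (mod Γ_{r+s+1})` for all `x`. -/
theorem stmt6 (G : Type*) [Group G] (f g : G →* G) (r s : ℕ)
    (hf : ∀ x : G, f x * x⁻¹ ∈ Gam G (r + 1))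
    (hg : ∀ x : G, g x * x⁻¹ ∈ Gam G (s + 1)) :
    ∀ x : G, (f (g x) * x⁻¹) * ((g x * x⁻¹) * (f x * x⁻¹))⁻¹ ∈ Gam G (r + s + 1) := by
  intro x
  have hf' : ∀ z : G, f z * z⁻¹ ∈ (⊤ : Subgroup G).lowerCentralSeries r := by
    intro z; simpa [Gam] using hf z
  have hg' : ∀ z : G, g z * z⁻¹ ∈ (⊤ : Subgroup G).lowerCentralSeries s := by
    intro z; simpa [Gam] using hg z
  set y : G := g x * x⁻¹ with hy
  have hymem : y ∈ (⊤ : Subgroup G).lowerCentralSeries s := hg' x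
  have hkey : f y * y⁻¹ ∈ (⊤ : Subgroup G).lowerCentralSeries (s + r) := key_lemma f r hf' s y hymem
  have heq : (f (g x) * x⁻¹) * ((g x * x⁻¹) * (f x * x⁻¹))⁻¹ = f y * y⁻¹ := by
    rw [hy, map_mul, map_inv]
    group
  rw [heq]
  have : Gam G (r + s + 1) = (⊤ : Subgroup G).lowerCentralSeries (s + r) := by
    show (⊤ : Subgroup G).lowerCentralSeries (r + s + 1 - 1) = _
    norm_num [Nat.add_comm]
  rw [this]
  exact hkey
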